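/- For 0 ≤ n ≤ m and parameters a, c, the terminating q-hypergeometric sum satisfies ∑_{j=0}^{n} ((q^{-n};q)_j (a;q)_j / ((c;q)_j (q;q)_j)) q^j = a^n (c/a;q)_n / (c;q)_n (the q-Chu–Vandermonde identity ₂φ₁(q^{-n}, a; c; q, q) = a^n (c/a)_n/(c)_n). -/

import Mathlib

noncomputable def qPoch (z q : ℝ) (m : ℕ) : ℝ := ∏ j ∈ Finset.range m, (1 - z * q ^ j)

lemma qPoch_zero' (z q : ℝ) : qPoch z q 0 = 1 := by simp [qPoch]

lemma qPoch_succ' (z q : ℝ) (m : ℕ) : qPoch z q (m+1) = qPoch z q m * (1 - z * q ^ m) := by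
  simp [qPoch, Finset.prod_range_succ]

lemma qPoch_shift' (z q : ℝ) (m : ℕ) : qPoch z q (m+1) = (1 - z) * qPoch (z*q) q m := by
  rw [qPoch, Finset.prod_range_succ', mul_comm]
  simp only [pow_zero, mul_one, qPoch]
  congr 1
  apply Finset.prod_congr rfl
  intros; ring

lemma qPoch_prefix_ne {c q : ℝ} {n j : ℕ} (h : qPoch c q n ≠ 0) (hj : j ≤ n) :
    qPoch c q j ≠ 0 := by
  intro h0
  apply h
  obtain ⟨i, hi, hz⟩ := Finset.prod_eq_zero_iff.mp h0
  exact Finset.prod_eq_zero (Finset.mem_range.mpr (lt_of_lt_of_le (Finset.mem_range.mp hi) hj)) hz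

lemma qPoch_q_pos {q : ℝ} (hq0 : 0 < q) (hq1 : q < 1) (j : ℕ) : 0 < qPoch q q j := by
  apply Finset.prod_pos
  intro i _
  have e : q * q ^ i = q ^ (i+1) := by ring
  have h := pow_lt_one₀ (le_of_lt hq0) hq1 (Nat.succ_ne_zero i)
  rw [Nat.succ_eq_add_one] at h
  rw [e]; linarith

/-- The summand of the terminating basic hypergeometric series. -/
noncomputable def qchuT (q a c : ℝ) (n : ℕ) (j : ℕ) : ℝ :=
  (qPoch (q ^ (-(n : ℤ))) q j * qPoch a q j / (qPoch c q j * qPoch q q j)) * q ^ j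

lemma q_chu_key (q : ℝ) (hq0 : 0 < q) (hq1 : q < 1) :
    ∀ n : ℕ, ∀ a c : ℝ, a ≠ 0 → qPoch c q n ≠ 0 →
    ∑ j ∈ Finset.range (n + 1), qchuT q a c n j
      = a ^ n * qPoch (c / a) q n / qPoch c q n := by
  have hq : q ≠ 0 := ne_of_gt hq0
  intro n
  induction n with
  | zero =>
    intro a c ha hc
    simp [qchuT, qPoch]
  | succ n ih =>
    intro a c ha hc
    have hqn : (q:ℝ)^n ≠ 0 := pow_ne_zero _ hq
    have hqn1 : (q:ℝ)^(n+1) ≠ 0 := pow_ne_zero _ hq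
    have hinv1 : q ^ (-((n+1:ℕ):ℤ)) = (q ^ (n+1))⁻¹ := by
      rw [zpow_neg, zpow_natCast]
    have hinv0 : q ^ (-(n:ℤ)) = (q ^ n)⁻¹ := by rw [zpow_neg, zpow_natCast]
    have hrs : q ^ (-((n+1:ℕ):ℤ)) * q = q ^ (-(n:ℤ)) := by
      rw [hinv1, hinv0, pow_succ]
      field_simp
    -- nonvanishing facts
    have hcn : qPoch c q n ≠ 0 := qPoch_prefix_ne hc (Nat.le_succ n)
    have hshift : qPoch c q (n+1) = (1-c) * qPoch (c*q) q n := qPoch_shift' c q n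
    have hcsucc : qPoch c q (n+1) = qPoch c q n * (1 - c * q ^ n) := qPoch_succ' c q n
    have h1c : (1:ℝ) - c ≠ 0 := by
      intro h; apply hc; rw [hshift, h, zero_mul]
    have hcq : qPoch (c*q) q n ≠ 0 := by
      intro h; apply hc; rw [hshift, h, mul_zero]
    have h1cq : (1:ℝ) - c * q ^ n ≠ 0 := by
      intro h; apply hc; rw [hcsucc, h, mul_zero]
    -- the termwise contiguous relation
    have hterm : ∀ k ∈ Finset.range (n+1),
        qchuT q a c (n+1) (k+1)
        = qchuT q a c n (k+1)
          - ((q ^ (n+1))⁻¹ * (q * (1-a) / (1-c))) * qchuT q (a*q) (c*q) n k := by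
      intro k hk
      have hk' : k ≤ n := Nat.lt_succ_iff.mp (Finset.mem_range.mp hk)
      have hCk : qPoch (c*q) q k ≠ 0 := qPoch_prefix_ne hcq hk'
      have hQk : qPoch q q k ≠ 0 := ne_of_gt (qPoch_q_pos hq0 hq1 k)
      have hfac : (1:ℝ) - q * q ^ k ≠ 0 := by
        have h := pow_lt_one₀ (le_of_lt hq0) hq1 (Nat.succ_ne_zero k)
        rw [Nat.succ_eq_add_one] at h
        have e : q * q ^ k = q ^ (k+1) := by ring
        intro h0; rw [e] at h0; linarith
      simp only [qchuT]
      rw [qPoch_shift' (q ^ (-((n+1:ℕ):ℤ))) q k, hrs,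
          qPoch_succ' (q ^ (-(n:ℤ))) q k, qPoch_shift' a q k, qPoch_shift' c q k,
          qPoch_succ' q q k, hinv1, hinv0]
      field_simp
      ring
    -- peel the first term of the sum
    have peel : ∑ j ∈ Finset.range (n+1+1), qchuT q a c (n+1) j
        = (∑ k ∈ Finset.range (n+1), qchuT q a c (n+1) (k+1)) + 1 := by
      rw [Finset.sum_range_succ']
      simp [qchuT, qPoch_zero']
    -- the top term of the shorter series vanishes
    have hTn : qchuT q a c n (n+1) = 0 := by
      have hz : qPoch (q ^ (-(n:ℤ))) q (n+1) = 0 := by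
        apply Finset.prod_eq_zero (Finset.mem_range.mpr (Nat.lt_succ_self n))
        rw [hinv0, inv_mul_cancel₀ hqn, sub_self]
      simp only [qchuT]
      rw [hz]
      simp
    have hTsum : (∑ k ∈ Finset.range (n+1), qchuT q a c n (k+1)) + 1
        = ∑ j ∈ Finset.range (n+1), qchuT q a c n j := by
      have h1 := Finset.sum_range_succ' (qchuT q a c n) (n+1)
      have h2 := Finset.sum_range_succ (qchuT q a c n) (n+1)
      have hT0 : qchuT q a c n 0 = 1 := by simp [qchuT, qPoch_zero']
      rw [h2, hTn, add_zero, hT0] at h1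
      linarith
    calc ∑ j ∈ Finset.range (n+1+1), qchuT q a c (n+1) j
        = (∑ k ∈ Finset.range (n+1), qchuT q a c (n+1) (k+1)) + 1 := peel
      _ = (∑ k ∈ Finset.range (n+1),
            (qchuT q a c n (k+1)
              - ((q ^ (n+1))⁻¹ * (q * (1-a) / (1-c))) * qchuT q (a*q) (c*q) n k)) + 1 := by
          rw [Finset.sum_congr rfl hterm]
      _ = ((∑ k ∈ Finset.range (n+1), qchuT q a c n (k+1)) + 1)
          - ((q ^ (n+1))⁻¹ * (q * (1-a) / (1-c)))
            * (∑ k ∈ Finset.range (n+1), qchuT q (a*q) (c*q) n k) := by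
          rw [Finset.sum_sub_distrib, ← Finset.mul_sum]; ring
      _ = (∑ j ∈ Finset.range (n+1), qchuT q a c n j)
          - ((q ^ (n+1))⁻¹ * (q * (1-a) / (1-c)))
            * (∑ k ∈ Finset.range (n+1), qchuT q (a*q) (c*q) n k) := by
          rw [hTsum]
      _ = a ^ (n+1) * qPoch (c / a) q (n+1) / qPoch c q (n+1) := by
          rw [ih a c ha hcn, ih (a*q) (c*q) (mul_ne_zero ha hq) hcq]
          have hdiv : c * q / (a * q) = c / a := by
            rw [mul_div_mul_right c a hq]
          have hCcq : qPoch (c*q) q n = qPoch c q n * (1 - c * q ^ n) / (1 - c) := by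
            rw [← hcsucc, hshift]; field_simp
          rw [hdiv, hCcq, qPoch_succ' (c/a) q n, hcsucc]
          field_simp
          ring

theorem q_chu_vandermonde (q a c : ℝ) (n : ℕ) (hq0 : 0 < q) (hq1 : q < 1)
    (ha : a ≠ 0) (hc : qPoch c q n ≠ 0) :
    ∑ j ∈ Finset.range (n + 1),
        (qPoch (q ^ (-(n : ℤ))) q j * qPoch a q j / (qPoch c q j * qPoch q q j)) * q ^ j
      = a ^ n * qPoch (c / a) q n / qPoch c q n := by
  exact q_chu_key q hq0 hq1 n a c ha hc
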